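/- Let L and M be Euclidean lattices (full-rank lattices in Euclidean spaces) of rank ℓ ≥ 2 and m ≥ 2 respectively. If every minimal vector of the tensor product lattice L ⊗_ℤ M (with inner product (x⊗y)·(z⊗t) = (x·z)(y·t)) is split, i.e. of the form x ⊗ y with x ∈ L and y ∈ M, then L ⊗_ℤ M is not perfect. -/

import Mathlib

open Matrix
open scoped Kronecker

lemma sym2_out_cases {α : Type*} (a b : α) :
    (Sym2.mk a b).out = (a, b) ∨ (Sym2.mk a b).out = (b, a) := by
  have h : Sym2.mk (Sym2.mk a b).out.1 (Sym2.mk a b).out.2 = Sym2.mk a b := by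
    exact Quot.out_eq _
  rcases Sym2.eq_iff.mp h with ⟨h1, h2⟩ | ⟨h1, h2⟩
  · left; exact Prod.ext h1 h2
  · right; exact Prod.ext h1 h2

/-- Two Euclidean lattices of ranks ℓ, m ≥ 2 are given by positive definite Gram
matrices `G`, `H` of their bases; their tensor product has Gram matrix the
Kronecker product `G ⊗ₖ H`.  Minimal vectors are nonzero integral coordinate
vectors of least squared length.  If every minimal vector `Z` of the tensor
product is split, i.e. `Z (i,j) = X i * Y j` for integral vectors `X`, `Y`, then
the tensor product is not perfect: the real span of the projection matrices
`Z Zᵗ`, for `Z` minimal, has dimension different from `ℓm(ℓm+1)/2`. -/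
theorem stmt0 (ℓ m : ℕ) (hl : 2 ≤ ℓ) (hm : 2 ≤ m)
    (G : Matrix (Fin ℓ) (Fin ℓ) ℝ) (H : Matrix (Fin m) (Fin m) ℝ)
    (hG : G.PosDef) (hH : H.PosDef)
    (minVecs : Set (Fin ℓ × Fin m → ℤ))
    (hminVecs : minVecs = {Z | Z ≠ 0 ∧ ∀ W : Fin ℓ × Fin m → ℤ, W ≠ 0 →
      (fun p => (Z p : ℝ)) ⬝ᵥ (G ⊗ₖ H).mulVec (fun p => (Z p : ℝ)) ≤
        (fun p => (W p : ℝ)) ⬝ᵥ (G ⊗ₖ H).mulVec (fun p => (W p : ℝ))})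
    (hsplit : ∀ Z ∈ minVecs, ∃ (X : Fin ℓ → ℤ) (Y : Fin m → ℤ),
      ∀ i j, Z (i, j) = X i * Y j) :
    Module.finrank ℝ (Submodule.span ℝ
      {A : Matrix (Fin ℓ × Fin m) (Fin ℓ × Fin m) ℝ |
        ∃ Z ∈ minVecs, A = fun p q => (Z p : ℝ) * (Z q : ℝ)}) ≠
      (ℓ * m) * (ℓ * m + 1) / 2 := by
  classical
  -- The subspace of "doubly symmetric" matrices
  set U : Submodule ℝ (Matrix (Fin ℓ × Fin m) (Fin ℓ × Fin m) ℝ) :=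
    { carrier := {M | ∀ i i' j j', M (i, j) (i', j') = M (i', j) (i, j') ∧
        M (i, j) (i', j') = M (i, j') (i', j)}
      add_mem' := by
        intro a b ha hb i i' j j'
        obtain ⟨h1, h2⟩ := ha i i' j j'
        obtain ⟨h1', h2'⟩ := hb i i' j j'
        constructor
        · simp only [Matrix.add_apply]; rw [h1, h1']
        · simp only [Matrix.add_apply]; rw [h2, h2']
      zero_mem' := by intro i i' j j'; simp
      smul_mem' := by
        intro c a ha i i' j j'
        obtain ⟨h1, h2⟩ := ha i i' j j'
        constructor
        · simp only [Matrix.smul_apply]; rw [h1]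
        · simp only [Matrix.smul_apply]; rw [h2] } with hU
  -- the generating set lies in U
  have hspan : Submodule.span ℝ
      {A : Matrix (Fin ℓ × Fin m) (Fin ℓ × Fin m) ℝ |
        ∃ Z ∈ minVecs, A = fun p q => (Z p : ℝ) * (Z q : ℝ)} ≤ U := by
    rw [Submodule.span_le]
    rintro A ⟨Z, hZ, rfl⟩
    obtain ⟨X, Y, hXY⟩ := hsplit Z hZ
    intro i i' j j'
    simp only [hXY]
    push_cast
    constructor <;> ring
  -- linear map to functions on Sym2 × Sym2
  let F : Matrix (Fin ℓ × Fin m) (Fin ℓ × Fin m) ℝ →ₗ[ℝ]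
      (Sym2 (Fin ℓ) × Sym2 (Fin m)) → ℝ :=
    { toFun := fun M st => M (st.1.out.1, st.2.out.1) (st.1.out.2, st.2.out.2)
      map_add' := by intro a b; funext st; simp [Matrix.add_apply]
      map_smul' := by intro c a; funext st; simp [Matrix.smul_apply] }
  have hinj : Function.Injective (F.comp U.subtype) := by
    rw [← LinearMap.ker_eq_bot, LinearMap.ker_eq_bot']
    rintro ⟨M, hM⟩ h
    have hM4 : ∀ i i' j j', M (i, j) (i', j') = M (i', j') (i, j) := by
      intro i i' j j'
      rw [(hM i i' j j').1, (hM i' i j j').2]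
    have hFM : F M = 0 := h
    ext ⟨i, j⟩ ⟨i', j'⟩
    have h0 := congrFun hFM (Sym2.mk i i', Sym2.mk j j')
    simp only [F, LinearMap.coe_mk, AddHom.coe_mk, Pi.zero_apply] at h0
    rcases sym2_out_cases i i' with hs | hs <;> rcases sym2_out_cases j j' with ht | ht <;>
      rw [hs, ht] at h0 <;> simp only [Matrix.zero_apply]
    · exact h0
    · rw [(hM i i' j j').2]; exact h0
    · rw [(hM i i' j j').1]; exact h0
    · rw [hM4]; exact h0
  -- dimension bound
  have hcard : Module.finrank ℝ ((Sym2 (Fin ℓ) × Sym2 (Fin m)) → ℝ) =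
      Fintype.card (Sym2 (Fin ℓ)) * Fintype.card (Sym2 (Fin m)) := by
    rw [Module.finrank_fintype_fun_eq_card, Fintype.card_prod]
  have hUle : Module.finrank ℝ U ≤
      Fintype.card (Sym2 (Fin ℓ)) * Fintype.card (Sym2 (Fin m)) := by
    rw [← hcard]
    exact LinearMap.finrank_le_finrank_of_injective hinj
  have hle : Module.finrank ℝ (Submodule.span ℝ
      {A : Matrix (Fin ℓ × Fin m) (Fin ℓ × Fin m) ℝ |
        ∃ Z ∈ minVecs, A = fun p q => (Z p : ℝ) * (Z q : ℝ)}) ≤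
      Fintype.card (Sym2 (Fin ℓ)) * Fintype.card (Sym2 (Fin m)) :=
    le_trans (Submodule.finrank_mono hspan) hUle
  -- arithmetic
  have hc1 : Fintype.card (Sym2 (Fin ℓ)) = ℓ * (ℓ + 1) / 2 := by
    rw [Sym2.card, Fintype.card_fin, Nat.choose_two_right]
    simp [Nat.mul_comm]
  have hc2 : Fintype.card (Sym2 (Fin m)) = m * (m + 1) / 2 := by
    rw [Sym2.card, Fintype.card_fin, Nat.choose_two_right]
    simp [Nat.mul_comm]
  have e1 : 2 * (ℓ * (ℓ + 1) / 2) = ℓ * (ℓ + 1) :=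
    Nat.two_mul_div_two_of_even (Nat.even_mul_succ_self ℓ)
  have e2 : 2 * (m * (m + 1) / 2) = m * (m + 1) :=
    Nat.two_mul_div_two_of_even (Nat.even_mul_succ_self m)
  have e3 : 2 * ((ℓ * m) * (ℓ * m + 1) / 2) = (ℓ * m) * (ℓ * m + 1) :=
    Nat.two_mul_div_two_of_even (Nat.even_mul_succ_self (ℓ * m))
  have harith : Fintype.card (Sym2 (Fin ℓ)) * Fintype.card (Sym2 (Fin m)) <
      (ℓ * m) * (ℓ * m + 1) / 2 := by
    rw [hc1, hc2]
    have hsum : ℓ + m ≤ ℓ * m := by nlinarith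
    have key : 4 * (ℓ * (ℓ + 1) / 2 * (m * (m + 1) / 2)) <
        4 * ((ℓ * m) * (ℓ * m + 1) / 2) := by
      have h4 : 4 * (ℓ * (ℓ + 1) / 2 * (m * (m + 1) / 2)) =
          (2 * (ℓ * (ℓ + 1) / 2)) * (2 * (m * (m + 1) / 2)) := by ring
      rw [h4, e1, e2]
      have h5 : 4 * ((ℓ * m) * (ℓ * m + 1) / 2) =
          2 * (2 * ((ℓ * m) * (ℓ * m + 1) / 2)) := by ring
      rw [h5, e3]
      nlinarith
    exact Nat.lt_of_mul_lt_mul_left key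
  exact ne_of_lt (lt_of_le_of_lt hle harith)
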